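/- Let f : X → 𝒢(Z,C) be a convex function and x₀, x ∈ dom f. Then the map t ↦ 0⁺(f(x + t(x₀ − x))) is constant on the open interval (0,1), and for all t ∈ (0,1) one has 0⁺(f(x + t(x₀ − x))) ⊇ 0⁺f(x) ∪ 0⁺f(x₀). -/

import Mathlib

open Set Pointwise

noncomputable section

variable {Z : Type*} [AddCommGroup Z] [Module ℝ Z] [TopologicalSpace Z]

/-- The inf-residual `A ⊖ B = {z : B + {z} ⊆ A}`. -/
def resid (A B : Set Z) : Set Z := {z : Z | B + {z} ⊆ A}

/-- The recession cone `0⁺A`, with the convention `0⁺∅ = ∅`. -/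
def recCone (A : Set Z) : Set Z := {z : Z | A.Nonempty ∧ A + {z} ⊆ A}

/-- `A ⊕ B = cl (A + B)`. -/
def oplus (A B : Set Z) : Set Z := closure (A + B)

/-- Membership in `𝒢(Z,C)`: `A = cl co (A + C)`. -/
def IsG (C A : Set Z) : Prop := A = closure (convexHull ℝ (A + C))

/-- The set `C⁻ \ {0}` of nonzero elements of the negative dual cone. -/
def negDualNZ (C : Set Z) : Set (Z →L[ℝ] ℝ) :=
  {p : Z →L[ℝ] ℝ | (∀ c ∈ C, p c ≤ 0) ∧ p ≠ 0}

/-- `inf {-z*(z) : z ∈ A}` as an extended real. -/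
def scal (p : Z →L[ℝ] ℝ) (A : Set Z) : EReal :=
  sInf ((fun z => ((-(p z) : ℝ) : EReal)) '' A)

/-- Support function `σ(z*|A) = sup {z*(z) : z ∈ A}` as an extended real. -/
def suppF (p : Z →L[ℝ] ℝ) (A : Set Z) : EReal :=
  sSup ((fun z => ((p z : ℝ) : EReal)) '' A)

/-- Inf-residuation on the extended reals: `r ⊖ s = inf {t ∈ ℝ : r ≤ s + t}`. -/
def eresid (r s : EReal) : EReal :=
  sInf ((fun t : ℝ => (t : EReal)) '' {t : ℝ | r ≤ s + (t : EReal)})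

variable {X : Type*} [AddCommGroup X] [Module ℝ X]

/-- The scalarization `φ_{f,z*}(x) = inf {-z*(z) : z ∈ f(x)}`. -/
def phi (f : X → Set Z) (p : Z →L[ℝ] ℝ) (x : X) : EReal := scal p (f x)

/-- Convexity for set-valued functions:
`f(t x₁ + (1-t) x₂) ⊇ cl (t f(x₁) + (1-t) f(x₂))`. -/
def ConvexSV (f : X → Set Z) : Prop :=
  ∀ x₁ x₂ : X, ∀ t : ℝ, t ∈ Ioo (0:ℝ) 1 →
    closure (t • f x₁ + (1 - t) • f x₂) ⊆ f (t • x₁ + (1 - t) • x₂)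

/-- The set-valued directional derivative
`f′(x,u) = ⋂_{t₀>0} cl co ⋃_{0<t<t₀} (1/t)•(f(x+tu) ⊖ f(x))`. -/
def sder (f : X → Set Z) (x u : X) : Set Z :=
  ⋂ t₀ ∈ Ioi (0:ℝ), closure (convexHull ℝ
    (⋃ t ∈ Ioo (0:ℝ) t₀, (1 / t) • resid (f (x + t • u)) (f x)))

/-- The scalar Dini derivative `φ′_{f,z*}(x,u) = inf_{t>0} (1/t)(φ(x+tu) ⊖ φ(x))`. -/
def phiDer (f : X → Set Z) (p : Z →L[ℝ] ℝ) (x u : X) : EReal :=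
  ⨅ t ∈ Ioi (0:ℝ), (((1 / t : ℝ)) : EReal) * eresid (phi f p (x + t • u)) (phi f p x)

end


section Aux
variable {Z : Type*} [AddCommGroup Z] [Module ℝ Z] [TopologicalSpace Z]
  [IsTopologicalAddGroup Z] [ContinuousSMul ℝ Z]

lemma scale_ray {D : Set Z} (hDc : Convex ℝ D) {c z : Z} {μ : ℝ} (hμ : 0 < μ)
    (h : ∀ n : ℕ, c + (μ * n) • z ∈ D) : ∀ s : ℝ, 0 ≤ s → c + s • z ∈ D := by
  intro s hs
  have hc : c ∈ D := by simpa using h 0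
  obtain ⟨n, hn⟩ := exists_nat_ge (s / μ)
  have hμn : s ≤ μ * n := by
    rw [div_le_iff₀ hμ] at hn; linarith
  rcases eq_or_lt_of_le hs with h0 | h0
  · simpa [← h0] using hc
  · have hμn0 : 0 < μ * n := lt_of_lt_of_le h0 hμn
    set θ := s / (μ * n) with hθdef
    have hθ0 : 0 ≤ θ := div_nonneg hs hμn0.le
    have hθ1 : θ ≤ 1 := (div_le_one hμn0).2 hμn
    have hmem := hDc hc (h n) (by linarith : (0:ℝ) ≤ 1 - θ) hθ0 (by ring)
    have hts : θ * (μ * n) = s := div_mul_cancel₀ s hμn0.ne'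
    have heq : c + s • z = (1 - θ) • c + θ • (c + (μ * n) • z) := by
      rw [← hts]; module
    rw [heq]; exact hmem

lemma ray_mem {D : Set Z} (hD : IsClosed D) (hDc : Convex ℝ D) {b c z : Z} (hb : b ∈ D)
    (h : ∀ s : ℝ, 0 ≤ s → c + s • z ∈ D) : b + z ∈ D := by
  set u : ℕ → Z := fun n =>
    (1 - 1/((n:ℝ)+1)) • b + (1/((n:ℝ)+1)) • (c + ((n:ℝ)+1) • z) with hu_def
  have hu : ∀ n, u n ∈ D := by
    intro n
    have hpos : (0:ℝ) < (n:ℝ) + 1 := by positivity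
    have h1 : (1:ℝ)/((n:ℝ)+1) ≤ 1 := by
      rw [div_le_one hpos]; linarith [Nat.cast_nonneg (α := ℝ) n]
    exact hDc hb (h _ hpos.le) (by linarith) (by positivity) (by ring)
  have hform : ∀ n, u n = (1 - 1/((n:ℝ)+1)) • b + (1/((n:ℝ)+1)) • c + z := by
    intro n
    have hne : ((n:ℝ)+1) ≠ 0 := by positivity
    rw [hu_def]
    simp only [smul_add, smul_smul, one_div_mul_cancel hne, one_smul, ← add_assoc]
  have h1 : Filter.Tendsto (fun n : ℕ => 1/((n:ℝ)+1)) Filter.atTop (nhds 0) :=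
    tendsto_one_div_add_atTop_nhds_zero_nat
  have htend : Filter.Tendsto u Filter.atTop (nhds (b + z)) := by
    have hT : Filter.Tendsto (fun n : ℕ => (1 - 1/((n:ℝ)+1)) • b + (1/((n:ℝ)+1)) • c + z)
        Filter.atTop (nhds ((1 - (0:ℝ)) • b + (0:ℝ) • c + z)) :=
      ((((tendsto_const_nhds (x := (1:ℝ))).sub h1).smul_const b).add
        (h1.smul_const c)).add tendsto_const_nhds
    simp only [sub_zero, one_smul, zero_smul, add_zero] at hT
    rw [funext hform]
    exact hT
  exact hD.mem_of_tendsto htend (Filter.Eventually.of_forall hu)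

lemma key_lemma {D A B : Set Z} (hD : IsClosed D) (hDc : Convex ℝ D)
    (hB : B.Nonempty) {l : ℝ} (hl0 : 0 < l) (hl1 : l < 1)
    (hsub : l • A + (1 - l) • B ⊆ D) : recCone A ⊆ recCone D := by
  rintro z ⟨⟨a, ha⟩, hAz⟩
  obtain ⟨b, hb⟩ := hB
  have hray : ∀ n : ℕ, a + (n:ℝ) • z ∈ A := by
    intro n
    induction n with
    | zero => simpa using ha
    | succ n ih =>
      have hmem : (a + (n:ℝ) • z) + z ∈ A := by
        apply hAz
        exact Set.add_mem_add ih rfl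
      have : a + ((n+1:ℕ):ℝ) • z = (a + (n:ℝ) • z) + z := by
        push_cast; rw [add_smul, one_smul]; abel
      rw [this]; exact hmem
  have hc : ∀ n : ℕ, (l • a + (1-l) • b) + (l * n) • z ∈ D := by
    intro n
    have hmem : l • (a + (n:ℝ) • z) + (1-l) • b ∈ D :=
      hsub (Set.add_mem_add (Set.smul_mem_smul_set (hray n)) (Set.smul_mem_smul_set hb))
    have : (l • a + (1-l) • b) + (l * n) • z = l • (a + (n:ℝ) • z) + (1-l) • b := by
      module
    rw [this]; exact hmem
  have hall : ∀ s : ℝ, 0 ≤ s → (l • a + (1-l) • b) + s • z ∈ D := scale_ray hDc hl0 hc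
  have hcD : (l • a + (1-l) • b) ∈ D := by simpa using hall 0 le_rfl
  refine ⟨⟨_, hcD⟩, ?_⟩
  rintro w hw
  rw [Set.mem_add] at hw
  obtain ⟨p, hp, q, hq, rfl⟩ := hw
  rw [Set.mem_singleton_iff] at hq; subst hq
  exact ray_mem hD hDc hp hall

end Aux


theorem stmt_4
  {Z : Type*} [AddCommGroup Z] [Module ℝ Z] [TopologicalSpace Z]
  [IsTopologicalAddGroup Z] [ContinuousSMul ℝ Z] [LocallyConvexSpace ℝ Z] [T2Space Z]
  {X : Type*} [AddCommGroup X] [Module ℝ X]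
  (C : Set Z) (hCclosed : IsClosed C) (hCconv : Convex ℝ C)
  (hCcone : ∀ c ∈ C, ∀ r : ℝ, 0 < r → r • c ∈ C) (hC0 : (0:Z) ∈ C)
  (f : X → Set Z) (hG : ∀ x, IsG C (f x)) (hf : ConvexSV f)
  (x₀ x : X) (hx₀ : (f x₀).Nonempty) (hx : (f x).Nonempty) :
    (∀ s ∈ Ioo (0:ℝ) 1, ∀ t ∈ Ioo (0:ℝ) 1,
        recCone (f (x + s • (x₀ - x))) = recCone (f (x + t • (x₀ - x))))
    ∧ (∀ t ∈ Ioo (0:ℝ) 1,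
        recCone (f x) ∪ recCone (f x₀) ⊆ recCone (f (x + t • (x₀ - x)))) := by
  have hfcl : ∀ v : X, IsClosed (f v) := by
    intro v; rw [hG v]; exact isClosed_closure
  have hfconv : ∀ v : X, Convex ℝ (f v) := by
    intro v; rw [hG v]; exact (convex_convexHull ℝ _).closure
  set d := x₀ - x with hd
  have hx₀d : x₀ = x + d := by rw [hd]; abel
  -- generic inclusion from a convex-combination representation
  have step : ∀ (w v : X) (l t : ℝ), 0 < l → l < 1 → (f w).Nonempty →
      l • v + (1 - l) • w = x + t • d →
      recCone (f v) ⊆ recCone (f (x + t • d)) := by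
    intro w v l t hl0 hl1 hw harg
    refine key_lemma (hfcl _) (hfconv _) hw hl0 hl1 ?_
    calc l • f v + (1 - l) • f w ⊆ closure (l • f v + (1 - l) • f w) := subset_closure
      _ ⊆ f (l • v + (1 - l) • w) := hf v w l ⟨hl0, hl1⟩
      _ = f (x + t • d) := by rw [harg]
  have mono : ∀ s ∈ Ioo (0:ℝ) 1, ∀ t ∈ Ioo (0:ℝ) 1,
      recCone (f (x + s • d)) ⊆ recCone (f (x + t • d)) := by
    rintro s ⟨hs0, hs1⟩ t ⟨ht0, ht1⟩
    rcases lt_trichotomy t s with hts | hts | hts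
    · -- t < s : combine with x
      refine step x (x + s • d) (t/s) t (div_pos ht0 hs0) ((div_lt_one hs0).2 hts) hx ?_
      have h1 : (t/s) * s = t := div_mul_cancel₀ t hs0.ne'
      have : (t/s) • (x + s • d) + (1 - t/s) • x = x + ((t/s) * s) • d := by module
      rw [this, h1]
    · subst hts; exact subset_rfl
    · -- s < t : combine with x₀
      have h1s : (0:ℝ) < 1 - s := by linarith
      refine step x₀ (x + s • d) ((1-t)/(1-s)) t (div_pos (by linarith) h1s)
        ((div_lt_one h1s).2 (by linarith)) hx₀ ?_
      have hsc : ((1-t)/(1-s)) * s + (1 - (1-t)/(1-s)) = t := by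
        field_simp
        ring
      rw [hx₀d]
      have : ((1-t)/(1-s)) • (x + s • d) + (1 - (1-t)/(1-s)) • (x + d)
          = x + (((1-t)/(1-s)) * s + (1 - (1-t)/(1-s))) • d := by module
      rw [this, hsc]
  constructor
  · intro s hs t ht
    exact subset_antisymm (mono s hs t ht) (mono t ht s hs)
  · rintro t ⟨ht0, ht1⟩ z hz
    rcases hz with hz | hz
    · -- from recCone (f x), l = 1 - t, pair with x₀
      refine step x₀ x (1 - t) t (by linarith) (by linarith) hx₀ ?_ hz
      have : (1 - t) • x + (1 - (1 - t)) • (x + d) = x + t • d := by module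
      rw [hx₀d]
      convert this using 3 <;> ring
    · -- from recCone (f x₀), l = t, pair with x
      refine step x x₀ t t ht0 ht1 hx ?_ hz
      rw [hx₀d]; module
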